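/- For an edge (i,j) and distinct types t ≠ t', the number of typed 4-path center-orbit instances with type vector (φ_i, φ_j, t, t') equals |S_i^t|·|S_j^{t'}| + |S_i^{t'}|·|S_j^t| minus the corresponding number of typed 4-cycles with the same type vector. -/
import Mathlib


open Finset

/-- Typed 4-path center orbit count for distinct types `t ≠ t'`:
`f(g₄) = |S_i^t|·|S_j^{t'}| + |S_i^{t'}|·|S_j^t| − f(g₆)` (4-cycles of the same type vector). -/
theorem typed_four_path_center_distinct_types {V T : Type*} [Fintype V] [DecidableEq V]
    [DecidableEq T]
    (G : SimpleGraph V) [DecidableRel G.Adj] (φ : V → T) (i j : V) (t t' : T)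
    (hij : G.Adj i j) (htt : t ≠ t') :
    let Γi := G.neighborFinset i
    let Γj := G.neighborFinset j
    let Tij := Γi ∩ Γj
    let Sit := (Γi \ (Tij ∪ {j})).filter (fun k => φ k = t)
    let Sit' := (Γi \ (Tij ∪ {j})).filter (fun k => φ k = t')
    let Sjt := (Γj \ (Tij ∪ {i})).filter (fun k => φ k = t)
    let Sjt' := (Γj \ (Tij ∪ {i})).filter (fun k => φ k = t')
    ((Sjt ×ˢ Sit').filter (fun p => ¬ G.Adj p.1 p.2)).card
      + ((Sjt' ×ˢ Sit).filter (fun p => ¬ G.Adj p.1 p.2)).card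
      = Sit.card * Sjt'.card + Sit'.card * Sjt.card
        - (((Sjt ×ˢ Sit').filter (fun p => G.Adj p.1 p.2)).card
           + ((Sjt' ×ˢ Sit).filter (fun p => G.Adj p.1 p.2)).card) := by
  intro Γi Γj Tij Sit Sit' Sjt Sjt'
  have h1 := card_filter_add_card_filter_not (s := Sjt ×ˢ Sit')
    (p := fun p => G.Adj p.1 p.2)
  have h2 := card_filter_add_card_filter_not (s := Sjt' ×ˢ Sit)
    (p := fun p => G.Adj p.1 p.2)
  rw [card_product, Nat.mul_comm] at h1 h2
  omega
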